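/- Let α_1, ..., α_n ∈ ℂ and let H := {σ ∈ Aut(ℂ) : σ maps the multiset {α_1,...,α_n} to itself}. Then the fixed field {z ∈ ℂ : σ(z) = z for all σ ∈ H} equals ℚ(e_1(α), ..., e_n(α)), the subfield of ℂ generated by the values of the elementary symmetric polynomials at (α_1,...,α_n). -/

import Mathlib

open Polynomial

/-- The `j`-th elementary symmetric polynomial evaluated at `α₁, ..., α_n`. -/
noncomputable def esymm (n j : ℕ) (α : Fin n → ℂ) : ℂ :=
  ∑ s ∈ Finset.powersetCard j (Finset.univ : Finset (Fin n)), ∏ i ∈ s, α i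

lemma map_multiset_esymm {R S : Type*} [CommRing R] [CommRing S] (f : R →+* S)
    (s : Multiset R) (j : ℕ) : f (s.esymm j) = (s.map f).esymm j := by
  simp only [Multiset.esymm, Multiset.powersetCard_map, map_multiset_sum, Multiset.map_map,
    Function.comp_def]
  congr 1
  refine Multiset.map_congr rfl fun t ht => ?_
  exact map_multiset_prod f t

set_option maxHeartbeats 1000000 in
set_option synthInstance.maxHeartbeats 400000 in
lemma extend_aut (F : Type*) [Field F] [Algebra F ℂ] (τ : F ≃+* F) :
    ∃ σ : ℂ ≃+* ℂ, ∀ x : F, σ (algebraMap F ℂ x) = algebraMap F ℂ (τ x) := by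
  obtain ⟨s, hs⟩ := exists_isTranscendenceBasis F ℂ
  haveI : NoZeroSMulDivisors (Algebra.adjoin F (Set.range ((↑) : s → ℂ))) ℂ :=
    ⟨fun {c x} h => by
      rw [Algebra.smul_def] at h
      exact (mul_eq_zero.mp h).imp (fun h => Subtype.ext h) id⟩
  haveI := IsAlgClosed.isAlgClosure_of_transcendence_basis _ hs
  let m : MvPolynomial s F ≃+* MvPolynomial s F := MvPolynomial.mapEquiv s τ
  let e := (hs.1.aevalEquiv.symm.toRingEquiv.trans m).trans hs.1.aevalEquiv.toRingEquiv
  refine ⟨IsAlgClosure.equivOfEquiv ℂ ℂ e, fun x => ?_⟩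
  have h1 : algebraMap F ℂ x =
      algebraMap (Algebra.adjoin F (Set.range ((↑) : s → ℂ))) ℂ (algebraMap F _ x) := by
    rw [← IsScalarTower.algebraMap_apply]
  have h2 : algebraMap F ℂ (τ x) =
      algebraMap (Algebra.adjoin F (Set.range ((↑) : s → ℂ))) ℂ (algebraMap F _ (τ x)) := by
    rw [← IsScalarTower.algebraMap_apply]
  rw [h1, h2, IsAlgClosure.equivOfEquiv_algebraMap]
  congr 1
  show hs.1.aevalEquiv (m (hs.1.aevalEquiv.symm (algebraMap F _ x))) = _
  have h3 : hs.1.aevalEquiv.symm (algebraMap F _ x) = MvPolynomial.C x := by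
    rw [show (MvPolynomial.C x : MvPolynomial s F) = algebraMap F _ x from rfl]
    exact hs.1.aevalEquiv.symm.commutes x
  rw [h3]
  show hs.1.aevalEquiv (MvPolynomial.map (τ : F →+* F) (MvPolynomial.C x)) = _
  rw [MvPolynomial.map_C]
  exact hs.1.aevalEquiv.commutes (τ x)

set_option maxHeartbeats 1000000 in
set_option synthInstance.maxHeartbeats 400000 in
lemma exists_aut_of_transcendental (F : Subfield ℂ) {z : ℂ} (hz : Transcendental F z) :
    ∃ σ : ℂ ≃+* ℂ, (∀ x ∈ F, σ x = x) ∧ σ z ≠ z := by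
  -- a transcendence basis containing z
  have hsingle : AlgebraicIndependent F ((↑) : ({z} : Set ℂ) → ℂ) := by
    haveI : Unique ({z} : Set ℂ) := Set.uniqueSingleton z
    rw [algebraicIndependent_unique_type_iff]
    have hd : ((default : ({z} : Set ℂ)) : ℂ) = z := (default : ({z} : Set ℂ)).2
    rw [hd]
    exact hz
  obtain ⟨u, hzu, hmax⟩ :=
    exists_maximal_algebraicIndependent ({z} : Set ℂ) Set.univ (Set.subset_univ _) hsingle
  have hu : IsTranscendenceBasis F ((↑) : u → ℂ) := by
    refine ⟨hmax.1.1, fun t ht hut => ?_⟩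
    simp only [Subtype.range_coe_subtype, Set.setOf_mem_eq] at *
    exact hmax.eq_of_le ⟨ht, Set.subset_univ _⟩ hut
  have hzu' : z ∈ u := hzu rfl
  set i₀ : u := ⟨z, hzu'⟩
  -- automorphism of the polynomial ring
  let v : u → MvPolynomial u F := fun i => if i = i₀ then MvPolynomial.X i + 1 else MvPolynomial.X i
  let w : u → MvPolynomial u F := fun i => if i = i₀ then MvPolynomial.X i - 1 else MvPolynomial.X i
  let φ : MvPolynomial u F →ₐ[F] MvPolynomial u F := MvPolynomial.aeval v
  let ψ : MvPolynomial u F →ₐ[F] MvPolynomial u F := MvPolynomial.aeval w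
  have hφψ : φ.comp ψ = AlgHom.id F _ := by
    apply MvPolynomial.algHom_ext
    intro i
    by_cases h : i = i₀ <;> simp [φ, ψ, v, w, h]
  have hψφ : ψ.comp φ = AlgHom.id F _ := by
    apply MvPolynomial.algHom_ext
    intro i
    by_cases h : i = i₀ <;> simp [φ, ψ, v, w, h]
  let autE : MvPolynomial u F ≃ₐ[F] MvPolynomial u F := AlgEquiv.ofAlgHom φ ψ hφψ hψφ
  set R := Algebra.adjoin F (Set.range ((↑) : u → ℂ))
  haveI : NoZeroSMulDivisors R ℂ :=
    ⟨fun {c x} h => by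
      rw [Algebra.smul_def] at h
      exact (mul_eq_zero.mp h).imp (fun h => Subtype.ext h) id⟩
  haveI := IsAlgClosed.isAlgClosure_of_transcendence_basis _ hu
  let e : R ≃ₐ[F] R := (hu.1.aevalEquiv.symm.trans autE).trans hu.1.aevalEquiv
  refine ⟨IsAlgClosure.equivOfEquiv ℂ ℂ e.toRingEquiv, ?_, ?_⟩
  · intro x hx
    have h1 : x = algebraMap R ℂ (algebraMap F R ⟨x, hx⟩) := by
      rw [← IsScalarTower.algebraMap_apply]; rfl
    rw [h1, IsAlgClosure.equivOfEquiv_algebraMap]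
    congr 1
    exact e.commutes ⟨x, hx⟩
  · set r : R := hu.1.aevalEquiv (MvPolynomial.X i₀)
    have hr : (r : ℂ) = z := by
      show (MvPolynomial.aeval ((↑) : u → ℂ) (MvPolynomial.X i₀) : ℂ) = z
      simp [i₀]
    have h1 : z = algebraMap R ℂ r := hr.symm
    rw [h1, IsAlgClosure.equivOfEquiv_algebraMap]
    have h2 : e r = hu.1.aevalEquiv (MvPolynomial.X i₀ + 1) := by
      show hu.1.aevalEquiv (autE (hu.1.aevalEquiv.symm r)) = _
      rw [show hu.1.aevalEquiv.symm r = MvPolynomial.X i₀ from hu.1.aevalEquiv.symm_apply_apply _]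
      congr 1
      show φ (MvPolynomial.X i₀) = _
      simp [φ, v]
    have h3 : algebraMap R ℂ (e r) = z + 1 := by
      rw [h2]
      show (MvPolynomial.aeval ((↑) : u → ℂ) (MvPolynomial.X i₀ + 1) : ℂ) = z + 1
      simp [i₀]
    rw [show e.toRingEquiv r = e r from rfl, h3, ← h1]
    simp

set_option maxHeartbeats 1000000 in
set_option synthInstance.maxHeartbeats 400000 in
lemma exists_aut_of_algebraic (F : Subfield ℂ) {z : ℂ} (hint : IsIntegral F z) (hz : z ∉ F) :
    ∃ σ : ℂ ≃+* ℂ, (∀ x ∈ F, σ x = x) ∧ σ z ≠ z := by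
  set P := minpoly F z with hPdef
  have hP0 : P ≠ 0 := minpoly.ne_zero hint
  have hsep : P.Separable := (minpoly.irreducible hint).separable
  set Q := P.map (algebraMap F ℂ) with hQdef
  have hQ0 : Q ≠ 0 := Polynomial.map_ne_zero hP0
  have hnodup : Q.roots.Nodup := Polynomial.nodup_roots (hsep.map)
  have hsplits : Q.Splits := IsAlgClosed.splits Q
  have hcard : Multiset.card Q.roots = Q.natDegree := (Polynomial.splits_iff_card_roots).1 hsplits
  have hdeg : 2 ≤ P.natDegree := by
    refine (minpoly.two_le_natDegree_iff hint).2 ?_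
    rintro ⟨y, hy⟩
    exact hz (hy ▸ y.2)
  have hdegQ : 2 ≤ Q.natDegree := by rwa [hQdef, Polynomial.natDegree_map]
  have hzroot : z ∈ Q.roots := by
    rw [hQdef, Polynomial.mem_roots_map hP0]
    exact minpoly.aeval F z
  obtain ⟨z', hz'root, hz'ne⟩ : ∃ z', z' ∈ Q.roots ∧ z' ≠ z := by
    by_contra h
    push_neg at h
    have hrep : Q.roots = Multiset.replicate (Multiset.card Q.roots) z :=
      Multiset.eq_replicate_card.2 h
    have hcount := Multiset.nodup_iff_count_le_one.1 hnodup z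
    rw [hrep, Multiset.count_replicate_self] at hcount
    omega
  set L := IntermediateField.adjoin F (P.rootSet ℂ) with hLdef
  haveI : IsSplittingField F L P :=
    IntermediateField.adjoin_rootSet_isSplittingField (IsAlgClosed.splits _)
  haveI : Normal F L := Normal.of_isSplittingField P
  have hzL : z ∈ L := IntermediateField.subset_adjoin _ _
    (Polynomial.mem_rootSet.2 ⟨hP0, minpoly.aeval F z⟩)
  have haevz' : Polynomial.aeval z' P = 0 := (Polynomial.mem_roots_map hP0).1 hz'root
  have hz'L : z' ∈ L := IntermediateField.subset_adjoin _ _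
    (Polynomial.mem_rootSet.2 ⟨hP0, haevz'⟩)
  set zL : L := ⟨z, hzL⟩
  set z'L : L := ⟨z', hz'L⟩
  have hinj : Function.Injective (algebraMap L ℂ) := (algebraMap (↥L) ℂ).injective
  have halg : IsAlgebraic F zL := by
    have : IsIntegral F zL := (isIntegral_algebraMap_iff hinj).1 hint
    exact this.isAlgebraic
  have hminEq : minpoly F zL = P := by
    rw [hPdef, show z = algebraMap L ℂ zL from rfl, minpoly.algebraMap_eq hinj]
  have hev : Polynomial.aeval z'L (minpoly F zL) = 0 := by
    have h2 : algebraMap L ℂ (Polynomial.aeval z'L (minpoly F zL)) = 0 := by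
      rw [← Polynomial.aeval_algebraMap_apply, hminEq]
      exact haevz'
    exact hinj (by rw [h2, map_zero])
  obtain ⟨τ, hτ⟩ := minpoly.exists_algEquiv_of_root' halg hev
  obtain ⟨σ, hσ⟩ := extend_aut (↥L) τ.toRingEquiv
  refine ⟨σ, ?_, ?_⟩
  · intro x hx
    have h1 : x = algebraMap L ℂ (algebraMap F L ⟨x, hx⟩) := rfl
    rw [h1, hσ]
    congr 1
    exact τ.commutes ⟨x, hx⟩
  · have h1 : z = algebraMap L ℂ zL := rfl
    rw [h1, hσ]
    have h2 : τ.toRingEquiv zL = z'L := hτ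
    rw [h2]
    exact fun hcon => hz'ne (congrArg Subtype.val (by simpa using hcon : z'L = zL))

lemma exists_aut_of_not_mem (F : Subfield ℂ) {z : ℂ} (hz : z ∉ F) :
    ∃ σ : ℂ ≃+* ℂ, (∀ x ∈ F, σ x = x) ∧ σ z ≠ z := by
  by_cases h : IsAlgebraic F z
  · exact exists_aut_of_algebraic F h.isIntegral hz
  · exact exists_aut_of_transcendental F h

/-- Let `H` be the set of field automorphisms of `ℂ` mapping the multiset
`{α₁, ..., α_n}` to itself.  Then the fixed field of `H` is the subfield of `ℂ`
generated by the elementary symmetric functions `e₁(α), ..., e_n(α)`. -/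
theorem stmt_8 (n : ℕ) (α : Fin n → ℂ) :
    {z : ℂ | ∀ σ : ℂ ≃+* ℂ,
        Multiset.map (⇑σ) (Multiset.map α Finset.univ.val) = Multiset.map α Finset.univ.val →
        σ z = z} =
      (Subfield.closure {x : ℂ | ∃ j, 1 ≤ j ∧ j ≤ n ∧ x = esymm n j α} : Set ℂ) := by
  classical
  set m : Multiset ℂ := Multiset.map α Finset.univ.val with hm
  have hcardm : Multiset.card m = n := by simp [hm]
  have hesymm : ∀ j, esymm n j α = m.esymm j := fun j => by
    rw [esymm, hm, Finset.esymm_map_val]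
  set S := {x : ℂ | ∃ j, 1 ≤ j ∧ j ≤ n ∧ x = esymm n j α} with hS
  set K := Subfield.closure S with hK
  apply Set.Subset.antisymm
  · intro z hz
    by_contra hzK
    obtain ⟨σ, hfix, hne⟩ := exists_aut_of_not_mem K hzK
    refine hne (hz σ ?_)
    set P : ℂ[X] := (m.map fun a => X - C a).prod with hP
    have hroots : P.roots = m := roots_multiset_prod_X_sub_C m
    have hfixesymm : ∀ j, j ≤ n → σ (m.esymm j) = m.esymm j := by
      intro j hj
      rcases Nat.eq_zero_or_pos j with h0 | h1
      · subst h0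
        have : m.esymm 0 = 1 := by simp [Multiset.esymm]
        rw [this, map_one]
      · exact hfix _ (Subfield.subset_closure ⟨j, h1, hj, (hesymm j).symm ▸ rfl⟩)
    have hcoeff : ∀ k, σ (P.coeff k) = P.coeff k := by
      intro k
      by_cases hk : k ≤ Multiset.card m
      · rw [Multiset.prod_X_sub_C_coeff m hk]
        rw [map_mul, map_pow, map_neg, map_one, hfixesymm _ (by omega)]
      · have h0 : P.coeff k = 0 := by
          apply coeff_eq_zero_of_natDegree_lt
          rw [hP, natDegree_multiset_prod_X_sub_C_eq_card]
          omega
        rw [h0, map_zero]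
    have hPmap : P.map (σ : ℂ →+* ℂ) = P := by
      ext k
      rw [coeff_map]
      exact hcoeff k
    have hsplit : P.Splits := IsAlgClosed.splits P
    have hcoe : Multiset.map (⇑σ) m = Multiset.map (⇑(σ : ℂ →+* ℂ)) m := rfl
    calc Multiset.map (⇑σ) m = Multiset.map (⇑(σ : ℂ →+* ℂ)) P.roots := by rw [hcoe, hroots]
      _ = (P.map (σ : ℂ →+* ℂ)).roots := (hsplit.roots_map _).symm
      _ = P.roots := by rw [hPmap]
      _ = m := hroots
  · intro z hz σ hσ
    have hle : Subfield.closure S ≤ RingHom.eqLocusField (σ : ℂ →+* ℂ) (RingHom.id ℂ) := by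
      rw [Subfield.closure_le]
      rintro x ⟨j, hj1, hjn, rfl⟩
      show (σ : ℂ →+* ℂ) (esymm n j α) = RingHom.id ℂ (esymm n j α)
      rw [hesymm j]
      calc σ (m.esymm j) = (Multiset.map (⇑σ) m).esymm j := map_multiset_esymm (σ : ℂ →+* ℂ) m j
        _ = m.esymm j := by rw [hσ]
    exact hle hz
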